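/- arXiv:1804.03795 — 2 statements merged into one kernel-verified Lean document; each statement's English description precedes it below -/
import Mathlib

section
/- Let a, b be coprime positive integers with 2 ≤ a ≤ b ≤ c and consider the monomial ideals in three variables: L_n generated by all x^k y^i z^j with 0 ≤ k ≤ a-1 and i + j ≥ n - ⌊kb/a⌋, and I_m generated by all x^k y^i z^j with k·b' + i·a' + j·a' ≥ m where d = gcd(a,b), a' = a/d, b' = b/d. Then L_n = I_{n·a'} for every n ≥ 1; i.e., for all k with 0 ≤ k ≤ a-1 and i, j ≥ 0: (i + j ≥ n - ⌊kb/a⌋) if and only if (k·b' + (i+j)·a' ≥ n·a'). -/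
theorem stmt_10 (a b : ℕ) (ha : 2 ≤ a) (hab : a ≤ b) (n : ℕ) (hn : 1 ≤ n) :
    ∀ k s : ℕ, k ≤ a - 1 →
      (n - k * b / a ≤ s ↔ n * (a / Nat.gcd a b) ≤ k * (b / Nat.gcd a b) + s * (a / Nat.gcd a b)) := by
  intro k s _
  set d := Nat.gcd a b with hd
  have hdpos : 0 < d := Nat.gcd_pos_of_pos_left b (by omega)
  have ha' : 0 < a / d := Nat.div_pos (Nat.gcd_le_left b (by omega)) hdpos
  have haa : a / d * d = a := Nat.div_mul_cancel (Nat.gcd_dvd_left a b)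
  have hbb : b / d * d = b := Nat.div_mul_cancel (Nat.gcd_dvd_right a b)
  have hkey : k * b / a = k * (b / d) / (a / d) := by
    conv_lhs => rw [← haa, ← hbb, ← mul_assoc, Nat.mul_div_mul_right _ _ hdpos]
  rw [hkey, tsub_le_iff_right, add_comm s, ← Nat.add_mul_div_right _ s ha']
  exact Nat.le_div_iff_mul_le ha'
end

section
/- Let r ≥ 2 be an integer. For the Brieskorn data (a, b, c) = (2, 2r+1, 2r+2), the lattice point count #{(t_0,t_1,t_2) ∈ ℤ_{≥0}³ : (2r+1)(2r+2)t_0 + 2(2r+2)t_1 + 2(2r+1)t_2 ≤ 2(2r+1)(2r+2) - (2r+1)(2r+2) - 2(2r+2) - 2(2r+1)} equals r(r-1)/2. -/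
open Finset

theorem stmt_17 (r : ℕ) (hr : 2 ≤ r) :
    {t : ℕ × ℕ × ℕ |
      (2 * r + 1) * (2 * r + 2) * t.1 + 2 * (2 * r + 2) * t.2.1 + 2 * (2 * r + 1) * t.2.2
        ≤ 2 * ((2 * r + 1) * (2 * r + 2)) - (2 * r + 1) * (2 * r + 2)
            - 2 * (2 * r + 2) - 2 * (2 * r + 1)}.ncard
      = r * (r - 1) / 2 := by
  obtain ⟨m, rfl⟩ : ∃ m, r = m + 2 := ⟨r - 2, by omega⟩
  have hR : 2 * ((2 * (m + 2) + 1) * (2 * (m + 2) + 2)) - (2 * (m + 2) + 1) * (2 * (m + 2) + 2)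
      - 2 * (2 * (m + 2) + 2) - 2 * (2 * (m + 2) + 1) = 4 * m ^ 2 + 14 * m + 8 := by
    have h1 : (2 * (m + 2) + 1) * (2 * (m + 2) + 2) = 4 * m ^ 2 + 22 * m + 30 := by ring
    omega
  have hset : {t : ℕ × ℕ × ℕ |
      (2 * (m + 2) + 1) * (2 * (m + 2) + 2) * t.1 + 2 * (2 * (m + 2) + 2) * t.2.1
        + 2 * (2 * (m + 2) + 1) * t.2.2
        ≤ 2 * ((2 * (m + 2) + 1) * (2 * (m + 2) + 2)) - (2 * (m + 2) + 1) * (2 * (m + 2) + 2)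
            - 2 * (2 * (m + 2) + 2) - 2 * (2 * (m + 2) + 1)} =
      ↑(((range (m + 1)).biUnion fun k => Finset.HasAntidiagonal.antidiagonal k).image
        fun p => ((0 : ℕ), p.1, p.2)) := by
    ext ⟨t0, t1, t2⟩
    simp only [Set.mem_setOf_eq, hR, coe_image, Set.mem_image, mem_coe, mem_biUnion,
      mem_range, Finset.HasAntidiagonal.mem_antidiagonal, Prod.exists, Prod.mk.injEq]
    constructor
    · intro h
      have h0 : t0 = 0 := by nlinarith
      have h12 : t1 + t2 ≤ m := by nlinarith
      exact ⟨t1, t2, ⟨t1 + t2, by omega, rfl⟩, h0.symm, rfl, rfl⟩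
    · rintro ⟨a, b, ⟨k, hk, hab⟩, h0, h1, h2⟩
      subst h1; subst h2
      have hab' : a + b ≤ m := by omega
      rw [← h0]
      nlinarith
  rw [hset, Set.ncard_coe_finset, Finset.card_image_of_injective _
    (fun p q h => by simpa [Prod.ext_iff] using h), Finset.card_biUnion]
  · have : ∀ k ∈ range (m + 1), (Finset.HasAntidiagonal.antidiagonal k).card = k + 1 := by
      intro k _; exact Finset.Nat.card_antidiagonal k
    rw [Finset.sum_congr rfl this]
    have key : ∀ n : ℕ, ∑ k ∈ range n, (k + 1) = n * (n + 1) / 2 := by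
      intro n
      induction n with
      | zero => simp
      | succ n ih =>
        rw [Finset.sum_range_succ, ih]
        have h : (n + 1) * (n + 1 + 1) = n * (n + 1) + 2 * (n + 1) := by ring
        obtain ⟨c, hc⟩ := Nat.even_mul_succ_self n
        omega
    rw [key]
    congr 1
    have h : m + 2 - 1 = m + 1 := by omega
    rw [h]; ring
  · intro i _ j _ hij
    simp only [Finset.disjoint_left, Finset.HasAntidiagonal.mem_antidiagonal]
    intro p hp hq
    omega
end
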